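/- Let L be a non-returning regular language over an alphabet Σ of state complexity n. If every atom A_S of L meets with equality the bounds κ(A_S) = 2^{n-1} for S ∈ {∅, Q_n} and κ(A_S) = 2 + Σ_{x=1}^{|S|} Σ_{y=1}^{n-|S|} C(n-1,x)·C(n-1-x,y) for ∅ ⊊ S ⊊ Q_n, then Σ has at least n(n-1)/2 letters. -/
import Mathlib

/-- Left quotient of a language by a word. -/
def leftQuot {α : Type} (L : Set (List α)) (w : List α) : Set (List α) := {x | w ++ x ∈ L}

/-- The set of left quotients of `L`. -/
def quotients {α : Type} (L : Set (List α)) : Set (Set (List α)) :=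
  Set.range (leftQuot L)

/-- The state complexity of `L`: the number of distinct left quotients of `L`. -/
noncomputable def stateComplexity {α : Type} (L : Set (List α)) : ℕ :=
  Nat.card (quotients L)

/-- `L` is non-returning: no quotient by a nonempty word equals `L`. -/
def NonReturning {α : Type} (L : Set (List α)) : Prop :=
  ∀ w : List α, w ≠ [] → leftQuot L w ≠ L

/-- The atomic intersection `A_S = ⋂_{i∈S} K_i ∩ ⋂_{i∉S} K_iᶜ` of a language whose
distinct left quotients are `K_0, …, K_{n-1}`. -/
def atomInt {α : Type} {n : ℕ} (K : Fin n → Set (List α)) (S : Set (Fin n)) :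
    Set (List α) :=
  {w | ∀ i : Fin n, (i ∈ S → w ∈ K i) ∧ (i ∉ S → w ∉ K i)}

namespace Stmt11Aux

theorem leftQuot_nil {α : Type} (L : Set (List α)) : leftQuot L [] = L := by
  ext x; simp [leftQuot]

theorem leftQuot_append {α : Type} (L : Set (List α)) (u w : List α) :
    leftQuot (leftQuot L u) w = leftQuot L (u ++ w) := by
  ext x; simp [leftQuot, List.append_assoc]

/-- The basic intersection `⋂_{i∈X} K_i ∩ ⋂_{i∈Y} K_iᶜ`. -/
def BB {α : Type} {n : ℕ} (K : Fin n → Set (List α)) (X Y : Finset (Fin n)) :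
    Set (List α) :=
  {w | (∀ i ∈ X, w ∈ K i) ∧ ∀ i ∈ Y, w ∉ K i}

theorem quot_atom {α : Type} {n : ℕ} (K : Fin n → Set (List α))
    (δ : List α → Fin n → Fin n) (hδ : ∀ w i, K (δ w i) = leftQuot (K i) w)
    (Sf : Finset (Fin n)) (w : List α) :
    leftQuot (atomInt K ↑Sf) w = BB K (Sf.image (δ w)) (Sfᶜ.image (δ w)) := by
  ext x
  have key : ∀ i : Fin n, (w ++ x ∈ K i ↔ x ∈ K (δ w i)) := by
    intro i; rw [hδ w i]; rfl
  constructor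
  · rintro h
    refine ⟨?_, ?_⟩
    · rintro j hj
      rcases Finset.mem_image.mp hj with ⟨i, hi, rfl⟩
      exact (key i).mp ((h i).1 (by exact_mod_cast hi))
    · rintro j hj hx
      rcases Finset.mem_image.mp hj with ⟨i, hi, rfl⟩
      exact (h i).2 (by simpa using (Finset.mem_compl.mp hi)) ((key i).mpr hx)
  · rintro ⟨h1, h2⟩ i
    constructor
    · intro hi
      exact (key i).mpr (h1 _ (Finset.mem_image_of_mem _ (by exact_mod_cast hi)))
    · intro hi hx
      exact h2 _ (Finset.mem_image_of_mem _ (Finset.mem_compl.mpr (by exact_mod_cast hi))) ((key i).mp hx)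

/-- Counting lemma: the number of pairs of disjoint nonempty subsets of `T`
with size bounds is at most the double sum of binomial products. -/
theorem count_pairs {ι : Type} [DecidableEq ι] (T : Finset ι) (k m : ℕ)
    (G : Finset (Finset ι × Finset ι))
    (hG : ∀ P ∈ G, P.1 ⊆ T ∧ P.2 ⊆ T ∧ Disjoint P.1 P.2 ∧ P.1.Nonempty ∧ P.2.Nonempty
      ∧ P.1.card ≤ k ∧ P.2.card ≤ m) :
    G.card ≤ ∑ x ∈ Finset.Icc 1 k, ∑ y ∈ Finset.Icc 1 m,
      T.card.choose x * (T.card - x).choose y := by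
  classical
  have hmem : ∀ P ∈ G, (P.1.card, P.2.card) ∈ Finset.Icc 1 k ×ˢ Finset.Icc 1 m := by
    intro P hP
    obtain ⟨-, -, -, h1, h2, h3, h4⟩ := hG P hP
    simp only [Finset.mem_product, Finset.mem_Icc]
    exact ⟨⟨Finset.card_pos.mpr h1, h3⟩, ⟨Finset.card_pos.mpr h2, h4⟩⟩
  rw [Finset.card_eq_sum_card_fiberwise hmem, Finset.sum_product]
  refine Finset.sum_le_sum fun x hx => Finset.sum_le_sum fun y hy => ?_
  have hsub : (G.filter fun P => (P.1.card, P.2.card) = (x, y)) ⊆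
      (Finset.powersetCard x T).biUnion
        (fun X => ((T \ X).powersetCard y).image (fun Y => (X, Y))) := by
    intro P hP
    rw [Finset.mem_filter] at hP
    obtain ⟨hPG, hPc⟩ := hP
    obtain ⟨hs1, hs2, hdisj, -, -, -, -⟩ := hG P hPG
    have hx1 : P.1.card = x := (Prod.mk.injEq _ _ _ _ ▸ hPc).1
    have hy1 : P.2.card = y := (Prod.mk.injEq _ _ _ _ ▸ hPc).2
    refine Finset.mem_biUnion.mpr ⟨P.1, Finset.mem_powersetCard.mpr ⟨hs1, hx1⟩, ?_⟩
    refine Finset.mem_image.mpr ⟨P.2, Finset.mem_powersetCard.mpr ⟨?_, hy1⟩, rfl⟩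
    intro a ha
    exact Finset.mem_sdiff.mpr ⟨hs2 ha, fun hc => (Finset.disjoint_right.mp hdisj ha) hc⟩
  calc (G.filter fun P => (P.1.card, P.2.card) = (x, y)).card
      ≤ _ := Finset.card_le_card hsub
    _ ≤ ∑ X ∈ Finset.powersetCard x T, (((T \ X).powersetCard y).image (fun Y => (X, Y))).card :=
        Finset.card_biUnion_le
    _ ≤ ∑ X ∈ Finset.powersetCard x T, (T.card - x).choose y := by
        refine Finset.sum_le_sum fun X hX => ?_
        have hXT := Finset.mem_powersetCard.mp hX
        calc (((T \ X).powersetCard y).image (fun Y => (X, Y))).card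
            ≤ ((T \ X).powersetCard y).card := Finset.card_image_le
          _ = (T \ X).card.choose y := Finset.card_powersetCard _ _
          _ = (T.card - x).choose y := by rw [Finset.card_sdiff_of_subset hXT.1, hXT.2]
    _ = T.card.choose x * (T.card - x).choose y := by
        rw [Finset.sum_const, Finset.card_powersetCard, smul_eq_mul]

end Stmt11Aux

open Stmt11Aux in
/-- If `L` is a non-returning language over an alphabet `Σ` of state complexity `n`
(`K` enumerates the distinct left quotients, `K 0 = L`) whose atoms all meet the
complexity bounds with equality, then `Σ` has at least `n(n-1)/2` letters. -/
theorem stmt11 {α : Type} [Fintype α] (n : ℕ) (hn : 1 ≤ n)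
    (L : Set (List α)) (hNR : NonReturning L)
    (K : Fin n → Set (List α)) (hKinj : Function.Injective K)
    (hKrange : Set.range K = quotients L) (hK0 : K ⟨0, by omega⟩ = L)
    (hbounds : ∀ S : Set (Fin n),
      ((S = ∅ ∨ S = Set.univ) → stateComplexity (atomInt K S) = 2 ^ (n - 1)) ∧
      (S ≠ ∅ ∧ S ≠ Set.univ →
        stateComplexity (atomInt K S) =
          2 + ∑ x ∈ Finset.Icc 1 S.ncard, ∑ y ∈ Finset.Icc 1 (n - S.ncard),
            (n - 1).choose x * (n - 1 - x).choose y)) :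
    n * (n - 1) / 2 ≤ Fintype.card α := by
  classical
  -- trivial case n = 1
  rcases Nat.lt_or_ge n 2 with h2 | h2
  · interval_cases n
    simp
  -- choose witnesses u i with K i = leftQuot L (u i)
  have hu : ∀ i : Fin n, ∃ u : List α, K i = leftQuot L u := by
    intro i
    have : K i ∈ quotients L := hKrange ▸ Set.mem_range_self i
    rcases this with ⟨u, hu⟩
    exact ⟨u, hu.symm⟩
  choose u hu using hu
  -- the zero state
  set z : Fin n := ⟨0, by omega⟩ with hz
  -- α is nonempty
  have hone : Fin n := ⟨1, by omega⟩
  have hαne : Nonempty α := by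
    by_contra hne
    have h1 : u ⟨1, by omega⟩ ≠ [] := by
      intro hnil
      have : K ⟨1, by omega⟩ = L := by rw [hu, hnil, leftQuot_nil]
      have := hKinj (this.trans hK0.symm)
      simp [Fin.ext_iff] at this
    rcases List.exists_cons_of_ne_nil h1 with ⟨a, -, -⟩
    exact hne ⟨a⟩
  -- case n = 2
  rcases Nat.lt_or_ge n 3 with h3 | h3
  · interval_cases n
    · have : 0 < Fintype.card α := Fintype.card_pos
      omega
  -- main case : n ≥ 3
  -- define the transition function δ
  have hδex : ∀ (w : List α) (i : Fin n), ∃ j, K j = leftQuot (K i) w := by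
    intro w i
    have : leftQuot (K i) w ∈ quotients L := by
      rw [hu i, leftQuot_append]
      exact ⟨u i ++ w, rfl⟩
    rw [← hKrange] at this
    exact this
  choose δ hδ using hδex
  -- composition
  have hcomp : ∀ (w v : List α) (i : Fin n), δ (w ++ v) i = δ v (δ w i) := by
    intro w v i
    apply hKinj
    rw [hδ, hδ, hδ, leftQuot_append]
  -- never returns to z
  have hnz : ∀ (w : List α), w ≠ [] → ∀ i, δ w i ≠ z := by
    intro w hw i hc
    have : K (δ w i) = leftQuot L (u i ++ w) := by rw [hδ, hu i, leftQuot_append]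
    rw [hc, hK0] at this
    exact hNR (u i ++ w) (by simp [hw]) this.symm
  -- the key lemma : for each pair p ≠ q there is a letter merging exactly p,q
  have main : ∀ s : Finset (Fin n), s.card = 2 → ∃ a : α,
      (∀ i ∈ s, ∀ j ∈ s, δ [a] i = δ [a] j) ∧
      (∀ i j : Fin n, δ [a] i = δ [a] j → i ≠ j → i ∈ s ∧ j ∈ s) := by
    intro s hs
    rcases Finset.card_eq_two.mp hs with ⟨p, q, hpq, rfl⟩
    -- target pair
    set T : Finset (Fin n) := Finset.univ.erase z with hT
    have hTcard : T.card = n - 1 := by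
      rw [hT, Finset.card_erase_of_mem (Finset.mem_univ z), Finset.card_univ, Fintype.card_fin]
    set Sf : Finset (Fin n) := {p, q} with hSf
    have hSfcard : Sf.card = 2 := hs
    have hScompl : Sfᶜ.card = n - 2 := by
      rw [Finset.card_compl, hSfcard, Fintype.card_fin]
    -- the set of good pairs
    set G : Finset (Finset (Fin n) × Finset (Fin n)) :=
      (T.powerset ×ˢ T.powerset).filter
        (fun P => Disjoint P.1 P.2 ∧ P.1.Nonempty ∧ P.2.Nonempty ∧ P.1.card ≤ 2 ∧ P.2.card ≤ n - 2)
      with hG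
    have hGmem : ∀ P, P ∈ G ↔ (P.1 ⊆ T ∧ P.2 ⊆ T ∧ Disjoint P.1 P.2 ∧ P.1.Nonempty ∧
        P.2.Nonempty ∧ P.1.card ≤ 2 ∧ P.2.card ≤ n - 2) := by
      intro P
      simp only [hG, Finset.mem_filter, Finset.mem_product, Finset.mem_powerset]
      tauto
    -- G.card is at most the double sum
    have hGcard : G.card ≤ ∑ x ∈ Finset.Icc 1 2, ∑ y ∈ Finset.Icc 1 (n - 2),
        (n - 1).choose x * (n - 1 - x).choose y := by
      have := count_pairs T 2 (n - 2) G (fun P hP => (hGmem P).mp hP)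
      rwa [hTcard] at this
    -- the target pair
    set r : Fin n := ⟨1, by omega⟩ with hr
    have hrz : r ≠ z := by simp [hr, hz, Fin.ext_iff]
    set X₀ : Finset (Fin n) := {r} with hX₀
    set Y₀ : Finset (Fin n) := T.erase r with hY₀
    have hY₀card : Y₀.card = n - 2 := by
      rw [hY₀, Finset.card_erase_of_mem (by simp [hT, hrz]), hTcard]
      omega
    have hP₀ : (X₀, Y₀) ∈ G := by
      rw [hGmem]
      refine ⟨by simp [hX₀, hT, hrz], Finset.erase_subset _ _, ?_, ⟨r, by simp [hX₀]⟩,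
        ?_, by simp [hX₀], by rw [hY₀card]⟩
      · simp only [hX₀, Finset.disjoint_singleton_left]
        exact Finset.notMem_erase _ _
      · rw [← Finset.card_pos, hY₀card]; omega
    -- the atom hypothesis for S = {p, q}
    have hSne : (↑Sf : Set (Fin n)) ≠ ∅ := by
      intro h
      have : p ∈ (↑Sf : Set (Fin n)) := by simp [hSf]
      rw [h] at this
      exact this
    have hSnuniv : (↑Sf : Set (Fin n)) ≠ Set.univ := by
      intro h
      have hc : Sfᶜ.Nonempty := by rw [← Finset.card_pos, hScompl]; omega
      rcases hc with ⟨i, hi⟩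
      have : i ∈ (↑Sf : Set (Fin n)) := h ▸ Set.mem_univ i
      exact Finset.mem_compl.mp hi (by exact_mod_cast this)
    have hncard : (↑Sf : Set (Fin n)).ncard = 2 := by
      rw [Set.ncard_coe_finset, hSfcard]
    have hatom : stateComplexity (atomInt K ↑Sf) =
        2 + ∑ x ∈ Finset.Icc 1 2, ∑ y ∈ Finset.Icc 1 (n - 2),
          (n - 1).choose x * (n - 1 - x).choose y := by
      have := (hbounds ↑Sf).2 ⟨hSne, hSnuniv⟩
      rwa [hncard] at this
    -- existence of a word realizing the target pair
    have hword : ∃ w : List α, w ≠ [] ∧ Sf.image (δ w) = X₀ ∧ Sfᶜ.image (δ w) = Y₀ := by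
      by_contra hcon
      push_neg at hcon
      -- every quotient of the atom lies in a small finite set
      set QQ : Set (Set (List α)) :=
        insert (atomInt K ↑Sf) (insert ∅
          ((fun P : Finset (Fin n) × Finset (Fin n) => BB K P.1 P.2) '' ↑(G.erase (X₀, Y₀))))
        with hQQ
      have hQfin : QQ.Finite := by
        rw [hQQ]
        exact (((G.erase (X₀, Y₀)).finite_toSet.image _).insert ∅).insert _
      have hsub : quotients (atomInt K ↑Sf) ⊆ QQ := by
        rintro M ⟨w, rfl⟩
        rcases eq_or_ne w [] with rfl | hw
        · rw [leftQuot_nil]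
          exact Set.mem_insert _ _
        · rw [quot_atom K δ hδ]
          set X := Sf.image (δ w) with hX
          set Y := Sfᶜ.image (δ w) with hY
          by_cases hdisj : Disjoint X Y
          · have hXY : (X, Y) ∈ G := by
              rw [hGmem]
              refine ⟨?_, ?_, hdisj, ?_, ?_, ?_, ?_⟩
              · intro j hj
                rcases Finset.mem_image.mp hj with ⟨i, -, rfl⟩
                exact Finset.mem_erase.mpr ⟨hnz w hw i, Finset.mem_univ _⟩
              · intro j hj
                rcases Finset.mem_image.mp hj with ⟨i, -, rfl⟩
                exact Finset.mem_erase.mpr ⟨hnz w hw i, Finset.mem_univ _⟩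
              · exact ⟨δ w p, Finset.mem_image_of_mem _ (by simp [hSf])⟩
              · rcases (by rw [← Finset.card_pos, hScompl]; omega : Sfᶜ.Nonempty) with ⟨i, hi⟩
                exact ⟨δ w i, Finset.mem_image_of_mem _ hi⟩
              · calc X.card ≤ Sf.card := Finset.card_image_le
                  _ = 2 := hSfcard
              · calc Y.card ≤ Sfᶜ.card := Finset.card_image_le
                  _ = n - 2 := hScompl
            have hne : (X, Y) ≠ (X₀, Y₀) := by
              intro hc
              have := hcon w hw
              rw [Prod.mk.injEq] at hc
              exact this hc.1 hc.2
            rw [hQQ]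
            refine Set.mem_insert_iff.mpr (Or.inr (Set.mem_insert_iff.mpr (Or.inr ?_)))
            exact ⟨(X, Y), Finset.mem_coe.mpr (Finset.mem_erase.mpr ⟨hne, hXY⟩), rfl⟩
          · -- non-disjoint: the quotient is empty
            have : BB K X Y = ∅ := by
              rcases Finset.not_disjoint_iff.mp hdisj with ⟨j, hjX, hjY⟩
              ext x
              simp only [BB, Set.mem_setOf_eq, Set.mem_empty_iff_false, iff_false]
              rintro ⟨h1, h2⟩
              exact h2 j hjY (h1 j hjX)
            rw [this]
            exact Set.mem_insert_iff.mpr (Or.inr (Set.mem_insert _ _))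
      -- cardinality bound
      have hcard1 : stateComplexity (atomInt K ↑Sf) ≤ QQ.ncard := by
        have h := Nat.card_mono hQfin hsub
        rw [Nat.card_coe_set_eq] at h
        exact h
      have hcard2 : QQ.ncard ≤ 1 + (1 + (G.card - 1)) := by
        rw [hQQ]
        refine le_trans (Set.ncard_insert_le _ _) ?_
        rw [Nat.add_comm _ 1]
        refine Nat.add_le_add_left ?_ 1
        refine le_trans (Set.ncard_insert_le _ _) ?_
        rw [Nat.add_comm _ 1]
        refine Nat.add_le_add_left ?_ 1
        refine le_trans (Set.ncard_image_le ((G.erase (X₀, Y₀)).finite_toSet)) ?_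
        rw [Set.ncard_coe_finset, Finset.card_erase_of_mem hP₀]
      have hG1 : 1 ≤ G.card := Finset.card_pos.mpr ⟨_, hP₀⟩
      omega
    rcases hword with ⟨w, hw, hwX, hwY⟩
    -- properties of δ w
    have hwp : δ w p = r := by
      have : δ w p ∈ X₀ := hwX ▸ Finset.mem_image_of_mem _ (by simp [hSf])
      simpa [hX₀] using this
    have hwq : δ w q = r := by
      have : δ w q ∈ X₀ := hwX ▸ Finset.mem_image_of_mem _ (by simp [hSf])
      simpa [hX₀] using this
    have hinj : Set.InjOn (δ w) ↑Sfᶜ := by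
      rw [← Finset.card_image_iff]
      rw [hwY, hY₀card, hScompl]
    have hker : ∀ i j : Fin n, δ w i = δ w j → i ≠ j → i ∈ Sf ∧ j ∈ Sf := by
      intro i j hij hne
      by_cases hi : i ∈ Sf
      · by_cases hj : j ∈ Sf
        · exact ⟨hi, hj⟩
        · exfalso
          have h1 : δ w i = r := by
            rcases Finset.mem_insert.mp hi with rfl | hi'
            · exact hwp
            · rw [Finset.mem_singleton.mp hi']; exact hwq
          have h2 : δ w j ∈ Y₀ := hwY ▸ Finset.mem_image_of_mem _ (Finset.mem_compl.mpr hj)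
          rw [← hij, h1] at h2
          exact Finset.notMem_erase _ _ h2
      · by_cases hj : j ∈ Sf
        · exfalso
          have h1 : δ w j = r := by
            rcases Finset.mem_insert.mp hj with rfl | hj'
            · exact hwp
            · rw [Finset.mem_singleton.mp hj']; exact hwq
          have h2 : δ w i ∈ Y₀ := hwY ▸ Finset.mem_image_of_mem _ (Finset.mem_compl.mpr hi)
          rw [hij, h1] at h2
          exact Finset.notMem_erase _ _ h2
        · exact absurd (hinj (Finset.mem_coe.mpr (Finset.mem_compl.mpr hi))
            (Finset.mem_coe.mpr (Finset.mem_compl.mpr hj)) hij) hne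
    -- first letter of w
    rcases List.exists_cons_of_ne_nil hw with ⟨a, w', rfl⟩
    have hsplit : ∀ i, δ (a :: w') i = δ w' (δ [a] i) := by
      intro i
      have : (a :: w') = [a] ++ w' := rfl
      rw [this, hcomp]
    have hkera : ∀ i j : Fin n, δ [a] i = δ [a] j → i ≠ j → i ∈ Sf ∧ j ∈ Sf := by
      intro i j hij hne
      exact hker i j (by rw [hsplit, hsplit, hij]) hne
    -- δ [a] is not injective
    have hninj : ¬ Function.Injective (δ [a]) := by
      intro hinj'
      have hsurj := Finite.surjective_of_injective hinj'
      rcases hsurj z with ⟨i, hi⟩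
      exact hnz [a] (by simp) i hi
    rw [Function.not_injective_iff] at hninj
    rcases hninj with ⟨i, j, hij, hne⟩
    have hij' := hkera i j hij hne
    -- δ [a] merges p and q
    have hmerge : δ [a] p = δ [a] q := by
      have hi : i = p ∨ i = q := by
        have := hij'.1
        rw [hSf, Finset.mem_insert, Finset.mem_singleton] at this
        exact this
      have hj : j = p ∨ j = q := by
        have := hij'.2
        rw [hSf, Finset.mem_insert, Finset.mem_singleton] at this
        exact this
      rcases hi with rfl | rfl
      · rcases hj with hj | hj
        · exact (hne hj.symm).elim
        · rw [← hj]; exact hij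
      · rcases hj with hj | hj
        · rw [← hj]; exact hij.symm
        · exact (hne hj.symm).elim
    refine ⟨a, ?_, hkera⟩
    intro i hi j hj
    rcases Finset.mem_insert.mp hi with rfl | hi' <;>
      rcases Finset.mem_insert.mp hj with rfl | hj'
    · rfl
    · rw [Finset.mem_singleton.mp hj']; exact hmerge
    · rw [Finset.mem_singleton.mp hi']; exact hmerge.symm
    · rw [Finset.mem_singleton.mp hi', Finset.mem_singleton.mp hj']
  -- build the injection from 2-element subsets to letters
  choose f hf1 hf2 using main
  set g : {s : Finset (Fin n) // s.card = 2} → α := fun s => f s.1 s.2 with hg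
  have hginj : Function.Injective g := by
    rintro ⟨s, hs⟩ ⟨t, ht⟩ hst
    simp only [hg] at hst
    rcases Finset.card_eq_two.mp hs with ⟨p, q, hpq, rfl⟩
    have h1 : δ [f {p, q} hs] p = δ [f {p, q} hs] q :=
      hf1 _ hs p (by simp) q (by simp)
    rw [hst] at h1
    have h2 := hf2 t ht p q h1 hpq
    have hcardt : ({p, q} : Finset (Fin n)) ⊆ t := by
      intro y hy
      rcases Finset.mem_insert.mp hy with rfl | hy'
      · exact h2.1
      · rw [Finset.mem_singleton.mp hy']; exact h2.2
    exact Subtype.ext (Finset.eq_of_subset_of_card_le hcardt (by rw [hs, ht]))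
  have hcard := Fintype.card_le_of_injective g hginj
  rw [Fintype.card_finset_len, Fintype.card_fin, Nat.choose_two_right] at hcard
  exact hcard
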